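/- Let D be a balanced set of 2k positive integers. Then there exists a 2k-cycle C with integer vertices such that the multiset of differences ΔC equals ±D, and all vertices of C lie in the interval [−d, d′], where d = max D and d′ = max(D∖{d}). -/

import Mathlib

open Finset in
theorem cycleKey (k τ : ℕ) (hτ1 : 1 ≤ τ) (hτk : τ < k) (e : ℕ → ℤ)
    (he : ∀ i j : ℕ, i < j → j < 2 * k → e i < e j) (he0 : 0 < e 0)
    (hbal : ∑ i ∈ Finset.range τ, (e (2*i+1) - e (2*i)) =
            ∑ i ∈ Finset.Ico τ k, (e (2*i+1) - e (2*i))) :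
    ∃ f : ℕ → ℤ, ∃ idx : ℕ → ℕ,
      (∀ h₁, h₁ < 2*k → ∀ h₂, h₂ < 2*k → f h₁ = f h₂ → h₁ = h₂) ∧
      (∀ i, i < 2*k → idx i < 2*k) ∧
      (∀ i j, i < 2*k → j < 2*k → i ≠ j → idx i ≠ idx j) ∧
      (∀ i, i < 2*k →
        ({f ((i+1) % (2*k)) - f i, -(f ((i+1) % (2*k)) - f i)} : Multiset ℤ)
          = {e (idx i), -(e (idx i))}) ∧
      (∀ h, h < 2*k → -(e (2*k-1)) ≤ f h ∧ f h ≤ e (2*k-2)) := by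
  obtain ⟨m, hm⟩ : ∃ m, τ + m + 1 = k := ⟨k - τ - 1, by omega⟩
  set s : ℕ → ℤ := fun i => e (2*i+1) - e (2*i) with hs_def
  set σ : ℕ → ℤ := fun t => ∑ i ∈ Finset.range t, s i with hσ_def
  have he_le : ∀ i j : ℕ, i ≤ j → j < 2*k → e i ≤ e j := by
    intro i j hij hj
    rcases eq_or_lt_of_le hij with h | h
    · rw [h]
    · exact le_of_lt (he i j h hj)
  have hepos : ∀ i, i < 2*k → 0 < e i := by
    intro i hi
    rcases Nat.eq_zero_or_pos i with h | h
    · rw [h]; exact he0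
    · exact lt_trans he0 (he 0 i h hi)
  have hspos : ∀ i, i < k → 0 < s i := by
    intro i hi
    have := he (2*i) (2*i+1) (by omega) (by omega)
    simp only [hs_def]; omega
  have hσstep : ∀ t, σ (t+1) = σ t + s t := by
    intro t; simp only [hσ_def]; rw [Finset.sum_range_succ]
  have hσlt : ∀ a b, a < b → b ≤ k → σ a < σ b := by
    intro a b hab hb
    have h1 : σ a + ∑ i ∈ Finset.Ico a b, s i = σ b := by
      simp only [hσ_def, Finset.range_eq_Ico]
      exact Finset.sum_Ico_consecutive s (Nat.zero_le a) (le_of_lt hab)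
    have h2 : 0 < ∑ i ∈ Finset.Ico a b, s i := by
      apply Finset.sum_pos
      · intro i hi
        simp only [Finset.mem_Ico] at hi
        exact hspos i (by omega)
      · exact ⟨a, by simp [Finset.mem_Ico]; omega⟩
    omega
  have hσle : ∀ a b, a ≤ b → b ≤ k → σ a ≤ σ b := by
    intro a b hab hb
    rcases eq_or_lt_of_le hab with h | h
    · rw [h]
    · exact le_of_lt (hσlt a b h hb)
  -- key interval-sum inequality
  have isum : ∀ a t, 0 < t → a + t ≤ k → σ (a+t) - σ a ≤ e (2*(a+t) - 1) - e (2*a) := by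
    intro a t
    induction t with
    | zero => omega
    | succ t ih =>
      intro _ hk2
      have hg : σ (a+(t+1)) = σ (a+t) + (e (2*(a+t)+1) - e (2*(a+t))) := by
        rw [show a+(t+1) = (a+t)+1 by omega, hσstep]
      rw [show 2*(a+(t+1)) - 1 = 2*(a+t)+1 by omega]
      rcases Nat.eq_zero_or_pos t with ht | ht
      · subst ht
        rw [show a+(0+1) = a+0+1 by omega] at hg ⊢
        rw [show a+0 = a by omega] at hg ⊢
        omega
      · have h1 := ih ht (by omega)
        have h3 : e (2*(a+t) - 1) ≤ e (2*(a+t)) := he_le _ _ (by omega) (by omega)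
        omega
  have hbal2 : σ k = 2 * σ τ := by
    have h1 : σ τ + ∑ i ∈ Finset.Ico τ k, s i = σ k := by
      simp only [hσ_def, Finset.range_eq_Ico]
      exact Finset.sum_Ico_consecutive s (Nat.zero_le τ) (le_of_lt hτk)
    have h2 : σ τ = ∑ i ∈ Finset.Ico τ k, s i := hbal
    omega
  -- the four vertex families
  set fA : ℕ → ℤ := fun p => σ (k-1) - σ (k-1-p) with hfA_def
  set fB : ℕ → ℤ := fun p => fA p + e (2*k-3-2*p) with hfB_def
  set fL : ℕ → ℤ := fun i => σ τ - e (2*k-1) - σ i with hfL_def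
  set fQ : ℕ → ℤ := fun i => fL i + e (2*i) with hfQ_def
  set f : ℕ → ℤ := fun h =>
    if h ≤ 2*m then fA (h/2) + (if h % 2 = 1 then e (2*k-2-h) else 0)
    else fL ((h - (2*m+1))/2) + (if h % 2 = 0 then e (2*((h - (2*m+1))/2)) else 0)
    with hf_def
  set idx : ℕ → ℕ := fun i =>
    if i < 2*m then 2*k-3-i else if i = 2*m then 2*k-2
    else if i = 2*k-1 then 2*k-1 else i - (2*m+1) with hidx_def
  -- evaluation lemmas
  have hfA : ∀ p, p ≤ m → f (2*p) = fA p := by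
    intro p hp
    simp only [hf_def]
    rw [if_pos (by omega : 2*p ≤ 2*m), if_neg (by omega : ¬ (2*p) % 2 = 1)]
    have : 2*p/2 = p := by omega
    rw [this, add_zero]
  have hfB : ∀ p, p < m → f (2*p+1) = fB p := by
    intro p hp
    simp only [hf_def, hfB_def]
    rw [if_pos (by omega : 2*p+1 ≤ 2*m), if_pos (by omega : (2*p+1) % 2 = 1)]
    have h1 : (2*p+1)/2 = p := by omega
    have h2 : 2*k-2-(2*p+1) = 2*k-3-2*p := by omega
    rw [h1, h2]
  have hfL : ∀ i, i ≤ τ → f (2*m+1+2*i) = fL i := by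
    intro i hi
    simp only [hf_def]
    rw [if_neg (by omega : ¬ 2*m+1+2*i ≤ 2*m), if_neg (by omega : ¬ (2*m+1+2*i) % 2 = 0)]
    have h1 : (2*m+1+2*i - (2*m+1))/2 = i := by omega
    rw [h1, add_zero]
  have hfQ : ∀ i, i < τ → f (2*m+2+2*i) = fQ i := by
    intro i hi
    simp only [hf_def, hfQ_def]
    rw [if_neg (by omega : ¬ 2*m+2+2*i ≤ 2*m), if_pos (by omega : (2*m+2+2*i) % 2 = 0)]
    have h1 : (2*m+2+2*i - (2*m+1))/2 = i := by omega
    rw [h1]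
  -- zone inequalities
  have hApos : ∀ p, p ≤ m → 0 ≤ fA p := by
    intro p hp
    have := hσle (k-1-p) (k-1) (by omega) (by omega)
    simp only [hfA_def]; omega
  have hAmono : ∀ p q, p < q → q ≤ m → fA p < fA q := by
    intro p q hpq hq
    have := hσlt (k-1-q) (k-1-p) (by omega) (by omega)
    simp only [hfA_def]; omega
  have hAle : ∀ p, p ≤ m → fA p ≤ fA m := by
    intro p hp
    rcases eq_or_lt_of_le hp with h | h
    · rw [h]
    · exact le_of_lt (hAmono p m h le_rfl)
  have hBgtU : ∀ p, p < m → fA m < fB p := by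
    intro p hp
    have h1 : σ (τ + (k-1-p-τ)) - σ τ ≤ e (2*(τ+(k-1-p-τ)) - 1) - e (2*τ) :=
      isum τ (k-1-p-τ) (by omega) (by omega)
    have h2 : τ + (k-1-p-τ) = k-1-p := by omega
    have h3 : 2*(k-1-p) - 1 = 2*k-3-2*p := by omega
    rw [h2, h3] at h1
    have h4 : 0 < e (2*τ) := hepos (2*τ) (by omega)
    have h5 : k-1-m = τ := by omega
    simp only [hfB_def, hfA_def]
    rw [h5]
    omega
  have hBled' : ∀ p, p < m → fB p ≤ e (2*k-2) := by
    intro p hp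
    rcases Nat.eq_zero_or_pos p with h | h
    · subst h
      have h1 : fA 0 = 0 := by simp [hfA_def]
      have h2 : e (2*k-3-2*0) ≤ e (2*k-2) := he_le _ _ (by omega) (by omega)
      simp only [hfB_def]
      omega
    · have h1 : σ ((k-1-p) + p) - σ (k-1-p) ≤ e (2*((k-1-p)+p) - 1) - e (2*(k-1-p)) :=
        isum (k-1-p) p h (by omega)
      have h2 : (k-1-p) + p = k-1 := by omega
      have h3 : 2*(k-1) - 1 = 2*k-3 := by omega
      have h4 : 2*(k-1-p) = 2*k-2-2*p := by omega
      rw [h2, h3, h4] at h1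
      have h5 : e (2*k-3-2*p) < e (2*k-2-2*p) := he _ _ (by omega) (by omega)
      have h6 : e (2*k-3) < e (2*k-2) := he _ _ (by omega) (by omega)
      simp only [hfB_def, hfA_def]
      omega
  have hBanti : ∀ p q, p < q → q < m → fB q < fB p := by
    intro p q hpq hq
    have h1 : σ ((k-1-q) + (q-p)) - σ (k-1-q) ≤ e (2*((k-1-q)+(q-p)) - 1) - e (2*(k-1-q)) :=
      isum (k-1-q) (q-p) (by omega) (by omega)
    have h2 : (k-1-q) + (q-p) = k-1-p := by omega
    have h3 : 2*(k-1-p) - 1 = 2*k-3-2*p := by omega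
    have h4 : 2*(k-1-q) = 2*k-2-2*q := by omega
    rw [h2, h3, h4] at h1
    have h5 : e (2*k-3-2*q) < e (2*k-2-2*q) := he _ _ (by omega) (by omega)
    simp only [hfB_def, hfA_def]
    omega
  have hLanti : ∀ i j, i < j → j ≤ τ → fL j < fL i := by
    intro i j hij hj
    have := hσlt i j hij (by omega)
    simp only [hfL_def]; omega
  have hLle0 : ∀ i, i ≤ τ → fL i ≤ fL 0 := by
    intro i hi
    rcases Nat.eq_zero_or_pos i with h | h
    · rw [h]
    · exact le_of_lt (hLanti 0 i h hi)
  have hστlt : σ τ < e (2*k-1) := by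
    have h1 : σ (0 + τ) - σ 0 ≤ e (2*(0+τ) - 1) - e (2*0) := isum 0 τ hτ1 (by omega)
    have h2 : (0:ℕ) + τ = τ := by omega
    have h3 : σ 0 = 0 := by simp [hσ_def]
    have h4 : e (2*τ - 1) ≤ e (2*k-2) := he_le _ _ (by omega) (by omega)
    have h5 : e (2*k-2) < e (2*k-1) := he _ _ (by omega) (by omega)
    rw [h2] at h1
    simp only [mul_zero] at h1
    omega
  have hL0neg : fL 0 < 0 := by
    have h3 : σ 0 = 0 := by simp [hσ_def]
    simp only [hfL_def]
    omega
  have hLlb : ∀ i, i ≤ τ → -(e (2*k-1)) ≤ fL i := by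
    intro i hi
    have := hσle i τ hi (by omega)
    simp only [hfL_def]; omega
  have hQmono : ∀ i j, i < j → j < τ → fQ i < fQ j := by
    intro i j hij hj
    have h1 : σ (i + (j-i)) - σ i ≤ e (2*(i+(j-i)) - 1) - e (2*i) :=
      isum i (j-i) (by omega) (by omega)
    have h2 : i + (j-i) = j := by omega
    rw [h2] at h1
    have h3 : e (2*j - 1) < e (2*j) := he _ _ (by omega) (by omega)
    simp only [hfQ_def, hfL_def]
    omega
  have hQneg : ∀ i, i < τ → fQ i < 0 := by
    intro i hi
    have h1 : σ (i + (τ-i)) - σ i ≤ e (2*(i+(τ-i)) - 1) - e (2*i) :=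
      isum i (τ-i) (by omega) (by omega)
    have h2 : i + (τ-i) = τ := by omega
    rw [h2] at h1
    have h3 : e (2*τ - 1) ≤ e (2*k-2) := he_le _ _ (by omega) (by omega)
    have h4 : e (2*k-2) < e (2*k-1) := he _ _ (by omega) (by omega)
    simp only [hfQ_def, hfL_def]
    omega
  have hQgtL0 : ∀ i, i < τ → fL 0 < fQ i := by
    intro i hi
    rcases Nat.eq_zero_or_pos i with h | h
    · subst h
      have h3 : σ 0 = 0 := by simp [hσ_def]
      simp only [hfQ_def, hfL_def, Nat.mul_zero]
      omega
    · have h1 : σ (0 + i) - σ 0 ≤ e (2*(0+i) - 1) - e (2*0) := isum 0 i h (by omega)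
      have h2 : (0:ℕ) + i = i := by omega
      have h3 : σ 0 = 0 := by simp [hσ_def]
      have h4 : e (2*i - 1) < e (2*i) := he _ _ (by omega) (by omega)
      rw [h2] at h1
      simp only [mul_zero] at h1
      simp only [hfQ_def, hfL_def]
      omega
  have hUled' : fA m ≤ e (2*k-2) := by
    rcases Nat.eq_zero_or_pos m with h | h
    · subst h
      have h1 : fA 0 = 0 := by simp [hfA_def]
      have := hepos (2*k-2) (by omega)
      omega
    · have h1 : σ (τ + m) - σ τ ≤ e (2*(τ+m) - 1) - e (2*τ) := isum τ m h (by omega)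
      have h2 : τ + m = k-1 := by omega
      have h3 : 2*(k-1) - 1 = 2*k-3 := by omega
      rw [h2, h3] at h1
      have h4 : 0 < e (2*τ) := hepos _ (by omega)
      have h5 : e (2*k-3) < e (2*k-2) := he _ _ (by omega) (by omega)
      have h6 : k-1-m = τ := by omega
      simp only [hfA_def, h6]
      omega
  have hAm : fA m = σ (k-1) - σ τ := by
    have h6 : k-1-m = τ := by omega
    simp only [hfA_def, h6]
  -- decomposition of positions
  have hdecomp : ∀ h, h < 2*k →
      (∃ p, p ≤ m ∧ h = 2*p) ∨ (∃ p, p < m ∧ h = 2*p+1) ∨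
      (∃ i, i ≤ τ ∧ h = 2*m+1+2*i) ∨ (∃ i, i < τ ∧ h = 2*m+2+2*i) := by
    intro h hh
    rcases Nat.lt_or_ge h (2*m+1) with h1 | h1
    · rcases Nat.even_or_odd h with ⟨p, hp⟩ | ⟨p, hp⟩
      · exact Or.inl ⟨p, by omega, by omega⟩
      · exact Or.inr (Or.inl ⟨p, by omega, by omega⟩)
    · rcases Nat.even_or_odd h with ⟨j, hj⟩ | ⟨j, hj⟩
      · exact Or.inr (Or.inr (Or.inr ⟨(h - (2*m+2))/2, by omega, by omega⟩))
      · exact Or.inr (Or.inr (Or.inl ⟨(h - (2*m+1))/2, by omega, by omega⟩))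
  -- idx facts
  have hidxlt : ∀ i, i < 2*k → idx i < 2*k := by
    intro i hi
    simp only [hidx_def]
    split_ifs <;> omega
  have hidxinj : ∀ i j, i < 2*k → j < 2*k → i ≠ j → idx i ≠ idx j := by
    intro i j hi hj hij
    simp only [hidx_def]
    split_ifs <;> omega
  -- step differences
  have hstep : ∀ i, i < 2*k →
      ({f ((i+1) % (2*k)) - f i, -(f ((i+1) % (2*k)) - f i)} : Multiset ℤ)
        = {e (idx i), -(e (idx i))} := by
    intro i hi
    rcases Nat.lt_or_ge i (2*k-1) with hlast | hlast
    · -- not the wrap-around step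
      have hmod : (i+1) % (2*k) = i+1 := Nat.mod_eq_of_lt (by omega)
      rw [hmod]
      rcases Nat.lt_or_ge i (2*m) with h1 | h1
      · -- up phase
        have hidxi : idx i = 2*k-3-i := by simp only [hidx_def]; rw [if_pos h1]
        rcases Nat.even_or_odd i with ⟨p, hp⟩ | ⟨p, hp⟩
        · have e1 : f i = fA p := by rw [show i = 2*p by omega]; exact hfA p (by omega)
          have e2 : f (i+1) = fB p := by rw [show i+1 = 2*p+1 by omega]; exact hfB p (by omega)
          have e3 : f (i+1) - f i = e (idx i) := by
            rw [e1, e2, hidxi, show 2*k-3-i = 2*k-3-2*p by omega]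
            simp only [hfB_def]
            ring
          rw [e3]
        · have e1 : f i = fB p := by rw [show i = 2*p+1 by omega]; exact hfB p (by omega)
          have e2 : f (i+1) = fA (p+1) := by
            rw [show i+1 = 2*(p+1) by omega]; exact hfA (p+1) (by omega)
          have e4 : σ (k-1-p) = σ (k-1-(p+1)) + s (k-1-(p+1)) := by
            rw [show k-1-p = (k-1-(p+1))+1 by omega, hσstep]
          have e5 : s (k-1-(p+1)) = e (2*k-3-2*p) - e (2*k-4-2*p) := by
            simp only [hs_def]
            rw [show 2*(k-1-(p+1))+1 = 2*k-3-2*p by omega, show 2*(k-1-(p+1)) = 2*k-4-2*p by omega]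
          have e3 : f (i+1) - f i = -(e (idx i)) := by
            rw [e1, e2, hidxi, show 2*k-3-i = 2*k-4-2*p by omega]
            simp only [hfB_def, hfA_def]
            omega
          rw [e3, neg_neg]
          exact Multiset.pair_comm _ _
      · rcases Nat.eq_or_lt_of_le h1 with h2 | h2
        · -- i = 2m : the lone step
          have hidxi : idx i = 2*k-2 := by
            simp only [hidx_def]; rw [if_neg (by omega), if_pos (by omega)]
          have e1 : f i = fA m := by rw [show i = 2*m by omega]; exact hfA m le_rfl
          have e2 : f (i+1) = fL 0 := by
            rw [show i+1 = 2*m+1+2*0 by omega]; exact hfL 0 (by omega)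
          have e4 : σ k = σ (k-1) + s (k-1) := by
            rw [show k = (k-1)+1 by omega, hσstep]
            rw [show k-1+1-1 = k-1 by omega]
          have e5 : s (k-1) = e (2*k-1) - e (2*k-2) := by
            simp only [hs_def]
            rw [show 2*(k-1)+1 = 2*k-1 by omega, show 2*(k-1) = 2*k-2 by omega]
          have e3 : f (i+1) - f i = -(e (idx i)) := by
            rw [e1, e2, hidxi, hAm]
            simp only [hfL_def]
            have h3 : σ 0 = 0 := by simp [hσ_def]
            omega
          rw [e3, neg_neg]
          exact Multiset.pair_comm _ _
        · -- down phase : 2m < i < 2k-1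
          have hidxi : idx i = i - (2*m+1) := by
            simp only [hidx_def]
            rw [if_neg (by omega), if_neg (by omega), if_neg (by omega)]
          rcases Nat.even_or_odd i with ⟨j0, hj0⟩ | ⟨j0, hj0⟩
          · obtain ⟨j, hj⟩ : ∃ j, i = 2*m+2+2*j := ⟨(i-(2*m+2))/2, by omega⟩
            have hjτ : j < τ := by omega
            have e1 : f i = fQ j := by rw [hj]; exact hfQ j hjτ
            have e2 : f (i+1) = fL (j+1) := by
              rw [show i+1 = 2*m+1+2*(j+1) by omega]; exact hfL (j+1) (by omega)
            have e4 : σ (j+1) = σ j + s j := hσstep j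
            have e5 : s j = e (2*j+1) - e (2*j) := rfl
            have e3 : f (i+1) - f i = -(e (idx i)) := by
              rw [e1, e2, hidxi, show i - (2*m+1) = 2*j+1 by omega]
              simp only [hfQ_def, hfL_def]
              omega
            rw [e3, neg_neg]
            exact Multiset.pair_comm _ _
          · obtain ⟨j, hj⟩ : ∃ j, i = 2*m+1+2*j := ⟨(i-(2*m+1))/2, by omega⟩
            have hjτ : j < τ := by omega
            have e1 : f i = fL j := by rw [hj]; exact hfL j (by omega)
            have e2 : f (i+1) = fQ j := by
              rw [show i+1 = 2*m+2+2*j by omega]; exact hfQ j hjτ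
            have e3 : f (i+1) - f i = e (idx i) := by
              rw [e1, e2, hidxi, show i - (2*m+1) = 2*j by omega]
              simp only [hfQ_def]
              ring
            rw [e3]
    · -- wrap-around step i = 2k-1
      have hieq : i = 2*k-1 := by omega
      have hmod : (i+1) % (2*k) = 0 := by
        have hx : i+1 = 2*k := by omega
        rw [hx, Nat.mod_self]
      have hidxi : idx i = 2*k-1 := by
        simp only [hidx_def]
        rw [if_neg (by omega), if_neg (by omega), if_pos (by omega)]
      have e1 : f i = fL τ := by
        rw [show i = 2*m+1+2*τ by omega]; exact hfL τ le_rfl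
      have e2 : f 0 = fA 0 := by
        rw [show (0:ℕ) = 2*0 by omega]; exact hfA 0 (by omega)
      have e3 : f ((i+1) % (2*k)) - f i = e (idx i) := by
        rw [hmod, e1, e2, hidxi]
        simp only [hfA_def, hfL_def]
        rw [show k-1-0 = k-1 by omega]
        ring
      rw [e3]
  -- injectivity
  have hApos' : ∀ p, p ≤ m → (0:ℤ) ≤ fA p := hApos
  have hLneg : ∀ i, i ≤ τ → fL i < 0 := fun i hi => lt_of_le_of_lt (hLle0 i hi) hL0neg
  have hQltz : ∀ i, i < τ → fQ i < 0 := hQneg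
  have hinj : ∀ h₁, h₁ < 2*k → ∀ h₂, h₂ < 2*k → f h₁ = f h₂ → h₁ = h₂ := by
    intro h₁ hlt₁ h₂ hlt₂ heq
    rcases hdecomp h₁ hlt₁ with ⟨p₁, hp₁, rfl⟩ | ⟨p₁, hp₁, rfl⟩ | ⟨i₁, hi₁, rfl⟩ | ⟨i₁, hi₁, rfl⟩ <;>
      rcases hdecomp h₂ hlt₂ with ⟨p₂, hp₂, rfl⟩ | ⟨p₂, hp₂, rfl⟩ | ⟨i₂, hi₂, rfl⟩ | ⟨i₂, hi₂, rfl⟩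
    · rw [hfA p₁ hp₁, hfA p₂ hp₂] at heq
      rcases lt_trichotomy p₁ p₂ with h | h | h
      · exact absurd heq (ne_of_lt (hAmono _ _ h hp₂))
      · omega
      · exact absurd heq.symm (ne_of_lt (hAmono _ _ h hp₁))
    · rw [hfA p₁ hp₁, hfB p₂ hp₂] at heq
      have := lt_of_le_of_lt (hAle p₁ hp₁) (hBgtU p₂ hp₂)
      omega
    · rw [hfA p₁ hp₁, hfL i₂ hi₂] at heq
      have := hApos p₁ hp₁
      have := hLneg i₂ hi₂
      omega
    · rw [hfA p₁ hp₁, hfQ i₂ hi₂] at heq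
      have := hApos p₁ hp₁
      have := hQltz i₂ hi₂
      omega
    · rw [hfB p₁ hp₁, hfA p₂ hp₂] at heq
      have := lt_of_le_of_lt (hAle p₂ hp₂) (hBgtU p₁ hp₁)
      omega
    · rw [hfB p₁ hp₁, hfB p₂ hp₂] at heq
      rcases lt_trichotomy p₁ p₂ with h | h | h
      · exact absurd heq.symm (ne_of_lt (hBanti _ _ h hp₂))
      · omega
      · exact absurd heq (ne_of_lt (hBanti _ _ h hp₁))
    · rw [hfB p₁ hp₁, hfL i₂ hi₂] at heq
      have := lt_of_le_of_lt (hApos m le_rfl) (hBgtU p₁ hp₁)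
      have := hLneg i₂ hi₂
      omega
    · rw [hfB p₁ hp₁, hfQ i₂ hi₂] at heq
      have := lt_of_le_of_lt (hApos m le_rfl) (hBgtU p₁ hp₁)
      have := hQltz i₂ hi₂
      omega
    · rw [hfL i₁ hi₁, hfA p₂ hp₂] at heq
      have := hApos p₂ hp₂
      have := hLneg i₁ hi₁
      omega
    · rw [hfL i₁ hi₁, hfB p₂ hp₂] at heq
      have := lt_of_le_of_lt (hApos m le_rfl) (hBgtU p₂ hp₂)
      have := hLneg i₁ hi₁
      omega
    · rw [hfL i₁ hi₁, hfL i₂ hi₂] at heq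
      rcases lt_trichotomy i₁ i₂ with h | h | h
      · exact absurd heq.symm (ne_of_lt (hLanti _ _ h hi₂))
      · omega
      · exact absurd heq (ne_of_lt (hLanti _ _ h hi₁))
    · rw [hfL i₁ hi₁, hfQ i₂ hi₂] at heq
      have := lt_of_le_of_lt (hLle0 i₁ hi₁) (hQgtL0 i₂ hi₂)
      omega
    · rw [hfQ i₁ hi₁, hfA p₂ hp₂] at heq
      have := hApos p₂ hp₂
      have := hQltz i₁ hi₁
      omega
    · rw [hfQ i₁ hi₁, hfB p₂ hp₂] at heq
      have := lt_of_le_of_lt (hApos m le_rfl) (hBgtU p₂ hp₂)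
      have := hQltz i₁ hi₁
      omega
    · rw [hfQ i₁ hi₁, hfL i₂ hi₂] at heq
      have := lt_of_le_of_lt (hLle0 i₂ hi₂) (hQgtL0 i₁ hi₁)
      omega
    · rw [hfQ i₁ hi₁, hfQ i₂ hi₂] at heq
      rcases lt_trichotomy i₁ i₂ with h | h | h
      · exact absurd heq (ne_of_lt (hQmono _ _ h hi₂))
      · omega
      · exact absurd heq.symm (ne_of_lt (hQmono _ _ h hi₁))
  -- bounds
  have hbound : ∀ h, h < 2*k → -(e (2*k-1)) ≤ f h ∧ f h ≤ e (2*k-2) := by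
    intro h hh
    have hek : 0 < e (2*k-1) := hepos _ (by omega)
    have hek' : 0 < e (2*k-2) := hepos _ (by omega)
    rcases hdecomp h hh with ⟨p, hp, rfl⟩ | ⟨p, hp, rfl⟩ | ⟨i, hi, rfl⟩ | ⟨i, hi, rfl⟩
    · rw [hfA p hp]
      have h1 := hApos p hp
      have h2 := le_trans (hAle p hp) hUled'
      omega
    · rw [hfB p hp]
      have h1 := lt_of_le_of_lt (hApos m le_rfl) (hBgtU p hp)
      have h2 := hBled' p hp
      omega
    · rw [hfL i hi]
      have h1 := hLlb i hi
      have h2 := hLneg i hi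
      omega
    · rw [hfQ i hi]
      have h1 := hQltz i hi
      have h2 := hQgtL0 i hi
      have h3 := hLlb 0 (by omega)
      omega
  exact ⟨f, idx, hinj, hidxlt, hidxinj, hstep, hbound⟩


/-- The `i`-th entry (0-indexed) of the alternating difference pattern of a finite
set `D` of integers: `s i = d_{2i+2} − d_{2i+1}` where `d₁ < d₂ < …` are the
elements of `D` in increasing order. -/
def adp (D : Finset ℤ) (i : ℕ) : ℤ :=
  (D.sort (· ≤ ·)).getD (2 * i + 1) 0 - (D.sort (· ≤ ·)).getD (2 * i) 0

/-- A set `D` of `2k` positive integers is balanced if for some `τ ∈ [1,k]`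
the first `τ` entries of the alternating difference pattern sum to the same
value as the remaining `k − τ` entries. -/
def IsBalancedSet (k : ℕ) (D : Finset ℤ) : Prop :=
  ∃ τ, 1 ≤ τ ∧ τ ≤ k ∧
    ∑ i ∈ Finset.range τ, adp D i = ∑ i ∈ Finset.Ico τ k, adp D i

/-- If `D` is a balanced set of `2k` positive integers, then there is a `2k`-cycle
`C` with integer vertices such that `ΔC = ±D` (as multisets) and all vertices of
`C` lie in `[−d, d′]` where `d = max D` and `d′ = max (D ∖ {d})`. -/
theorem stmt3 (k : ℕ) (hk : 0 < k) [NeZero (2 * k)] (D : Finset ℤ)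
    (hcard : D.card = 2 * k) (hpos : ∀ x ∈ D, 0 < x) (hbal : IsBalancedSet k D)
    (d d' : ℤ) (hd : d ∈ D ∧ ∀ x ∈ D, x ≤ d)
    (hd' : d' ∈ D.erase d ∧ ∀ x ∈ D.erase d, x ≤ d') :
    ∃ C : ZMod (2 * k) → ℤ, Function.Injective C ∧
      ((Finset.univ.val : Multiset (ZMod (2 * k))).bind fun h =>
          {C (h + 1) - C h, -(C (h + 1) - C h)})
        = D.val + D.val.map (fun x => -x) ∧
      ∀ h, C h ∈ Set.Icc (-d) d' := by
  classical
  set l : List ℤ := D.sort (· ≤ ·) with hl_def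
  set e : ℕ → ℤ := fun i => l.getD i 0 with he_def
  have hlen : l.length = 2 * k := by
    rw [hl_def, Finset.length_sort, hcard]
  have hgetD : ∀ i (_ : i < 2*k), e i = l[i]'(by omega) := by
    intro i hi
    simp only [he_def]
    exact List.getD_eq_getElem l 0 (by omega)
  have he : ∀ i j : ℕ, i < j → j < 2 * k → e i < e j := by
    intro i j hij hj
    have hsorted : List.Pairwise (· < ·) l := (Finset.sortedLT_sort D).pairwise
    have := List.pairwise_iff_getElem.mp hsorted i j (by omega) (by omega) hij
    rw [hgetD i (by omega), hgetD j hj]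
    exact this
  have he_le : ∀ i j : ℕ, i ≤ j → j < 2*k → e i ≤ e j := by
    intro i j hij hj
    rcases eq_or_lt_of_le hij with h | h
    · rw [h]
    · exact le_of_lt (he i j h hj)
  have hmemD : ∀ i, i < 2*k → e i ∈ D := by
    intro i hi
    rw [hgetD i hi]
    exact (Finset.mem_sort (α := ℤ) (· ≤ ·)).mp (List.getElem_mem _)
  have he0 : 0 < e 0 := hpos _ (hmemD 0 (by omega))
  have hrep : ∀ x ∈ D, ∃ i, i < 2*k ∧ e i = x := by
    intro x hx
    have hxl : x ∈ l := (Finset.mem_sort (α := ℤ) (· ≤ ·)).mpr hx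
    obtain ⟨i, hi, hEq⟩ := List.mem_iff_getElem.mp hxl
    exact ⟨i, by omega, by rw [hgetD i (by omega)]; exact hEq⟩
  have hd_eq : d = e (2*k-1) := by
    apply le_antisymm
    · obtain ⟨i, hi, hei⟩ := hrep d hd.1
      rw [← hei]
      exact he_le i (2*k-1) (by omega) (by omega)
    · exact hd.2 _ (hmemD _ (by omega))
  have hd'_eq : d' = e (2*k-2) := by
    apply le_antisymm
    · obtain ⟨j, hj, hej⟩ := hrep d' (Finset.mem_of_mem_erase hd'.1)
      have hne : d' ≠ d := Finset.ne_of_mem_erase hd'.1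
      have hjne : j ≠ 2*k-1 := by
        intro hcon
        apply hne
        rw [← hej, hcon, hd_eq]
      rw [← hej]
      exact he_le j (2*k-2) (by omega) (by omega)
    · apply hd'.2
      apply Finset.mem_erase.mpr
      refine ⟨?_, hmemD _ (by omega)⟩
      rw [hd_eq]
      exact ne_of_lt (he (2*k-2) (2*k-1) (by omega) (by omega))
  -- get τ
  obtain ⟨τ, hτ1, hτk', hbalτ⟩ := hbal
  have hadp : ∀ i, adp D i = e (2*i+1) - e (2*i) := fun i => rfl
  have hτk : τ < k := by
    rcases eq_or_lt_of_le hτk' with h | h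
    · exfalso
      subst h
      rw [Finset.Ico_self, Finset.sum_empty] at hbalτ
      have hposum : 0 < ∑ i ∈ Finset.range τ, adp D i := by
        apply Finset.sum_pos
        · intro i hi
          simp only [Finset.mem_range] at hi
          rw [hadp]
          have := he (2*i) (2*i+1) (by omega) (by omega)
          omega
        · exact ⟨0, Finset.mem_range.mpr (by omega)⟩
      omega
    · exact h
  have hbal' : ∑ i ∈ Finset.range τ, (e (2*i+1) - e (2*i)) =
      ∑ i ∈ Finset.Ico τ k, (e (2*i+1) - e (2*i)) := by
    simp only [hadp] at hbalτ
    exact hbalτ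
  obtain ⟨f, idx, hinj, hidxlt, hidxinj, hstep, hbound⟩ :=
    cycleKey k τ hτ1 hτk e he he0 hbal'
  refine ⟨fun z => f z.val, ?_, ?_, ?_⟩
  · -- injectivity
    intro a b hab
    exact ZMod.val_injective _ (hinj a.val (ZMod.val_lt a) b.val (ZMod.val_lt b) hab)
  · -- multiset equality
    have huniv : Multiset.map (fun i : ℕ => (i : ZMod (2*k))) (Multiset.range (2*k))
        = (Finset.univ.val : Multiset (ZMod (2*k))) := by
      apply Multiset.eq_of_le_of_card_le
      · rw [Multiset.le_iff_subset]
        · intro x _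
          exact Finset.mem_val.mpr (Finset.mem_univ x)
        · apply Multiset.Nodup.map_on _ (Multiset.nodup_range _)
          intro i hi j hj hij
          have hi' : i < 2*k := Multiset.mem_range.mp hi
          have hj' : j < 2*k := Multiset.mem_range.mp hj
          have := congrArg ZMod.val hij
          rwa [ZMod.val_cast_of_lt hi', ZMod.val_cast_of_lt hj'] at this
      · rw [Multiset.card_map, Multiset.card_range]
        have : Multiset.card (Finset.univ.val : Multiset (ZMod (2*k))) = Fintype.card (ZMod (2*k)) := rfl
        rw [this, ZMod.card]
    rw [← huniv, Multiset.bind_map]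
    have hpt : ∀ i ∈ Multiset.range (2*k),
        ({(fun z : ZMod (2*k) => f z.val) ((i : ZMod (2*k)) + 1) - (fun z : ZMod (2*k) => f z.val) (i : ZMod (2*k)),
          -((fun z : ZMod (2*k) => f z.val) ((i : ZMod (2*k)) + 1) - (fun z : ZMod (2*k) => f z.val) (i : ZMod (2*k)))} : Multiset ℤ)
          = {e (idx i), -(e (idx i))} := by
      intro i hi
      have hi' : i < 2*k := Multiset.mem_range.mp hi
      have h1 : ((i : ZMod (2*k)) + 1) = ((i+1 : ℕ) : ZMod (2*k)) := by push_cast; ring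
      have h2 : ((i : ZMod (2*k))).val = i := ZMod.val_cast_of_lt hi'
      have h3 : (((i+1 : ℕ) : ZMod (2*k))).val = (i+1) % (2*k) := ZMod.val_natCast _ _
      simp only [h1, h2, h3]
      exact hstep i hi'
    rw [Multiset.bind_congr hpt]
    have hsplit : (Multiset.range (2*k)).bind (fun i => ({e (idx i), -(e (idx i))} : Multiset ℤ))
        = Multiset.map (fun i => e (idx i)) (Multiset.range (2*k))
          + Multiset.map (fun i => -(e (idx i))) (Multiset.range (2*k)) := by
      simp only [Multiset.insert_eq_cons, Multiset.bind_cons, Multiset.bind_singleton]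
    rw [hsplit]
    have hidxperm : Multiset.map idx (Multiset.range (2*k)) = Multiset.range (2*k) := by
      apply Multiset.eq_of_le_of_card_le
      · rw [Multiset.le_iff_subset]
        · intro x hx
          obtain ⟨i, hi, rfl⟩ := Multiset.mem_map.mp hx
          exact Multiset.mem_range.mpr (hidxlt i (Multiset.mem_range.mp hi))
        · apply Multiset.Nodup.map_on _ (Multiset.nodup_range _)
          intro i hi j hj hij
          by_contra hne
          exact hidxinj i j (Multiset.mem_range.mp hi) (Multiset.mem_range.mp hj) hne hij
      · rw [Multiset.card_map]
    have hmape : Multiset.map e (Multiset.range (2*k)) = D.val := by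
      rw [← Multiset.coe_range, Multiset.map_coe]
      have hlmap : (List.range (2*k)).map e = l := by
        apply List.ext_getElem
        · rw [List.length_map, List.length_range, hlen]
        · intro n h1 h2
          rw [List.getElem_map, List.getElem_range]
          exact (hgetD n (by rwa [hlen] at h2))
      rw [hlmap, hl_def]
      exact Finset.sort_eq D (· ≤ ·)
    have hcomp1 : Multiset.map (fun i => e (idx i)) (Multiset.range (2*k)) = D.val := by
      rw [show (fun i => e (idx i)) = e ∘ idx from rfl, ← Multiset.map_map, hidxperm, hmape]
    have hcomp2 : Multiset.map (fun i => -(e (idx i))) (Multiset.range (2*k))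
        = D.val.map (fun x => -x) := by
      rw [show (fun i => -(e (idx i))) = (fun x : ℤ => -x) ∘ (fun i => e (idx i)) from rfl,
        ← Multiset.map_map, hcomp1]
    rw [hcomp1, hcomp2]
  · -- bounds
    intro h
    have hb := hbound h.val (ZMod.val_lt h)
    rw [Set.mem_Icc, hd_eq, hd'_eq]
    exact hb
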